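/- Let λ = 2 and P ∈ ℝ, let I be an open interval, and let ψ : I → ℝ be a strictly positive classical solution of the homogeneous Euler ODE with parameters (2, P) such that ψ′(c) = 0 for some c ∈ I. Then, with A = ψ(c), γ₁ = (A + P/(2A))/2 and γ₂ = (A − P/(2A))/2, one has ψ(θ) = γ₁ + γ₂ cos(2(θ − c)) for all θ ∈ I; in particular P = 2(γ₁² − γ₂²). -/

import Mathlib

open Real Set

lemma const_of_deriv_zero' {s : Set ℝ} (hs : IsOpen s) (hconn : IsPreconnected s)
    {f : ℝ → ℝ} (hf : ∀ x ∈ s, HasDerivAt f 0 x) {x y : ℝ}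
    (hx : x ∈ s) (hy : y ∈ s) : f x = f y := by
  have hconv : Convex ℝ s := hconn.ordConnected.convex
  refine hconv.is_const_of_fderivWithin_eq_zero
    (fun z hz => ((hf z hz).differentiableAt).differentiableWithinAt) (fun z hz => ?_) hx hy
  rw [fderivWithin_of_isOpen hs hz, (hf z hz).hasFDerivAt.fderiv]
  ext
  simp

/-- For `λ = 2`, every strictly positive classical solution of the homogeneous
Euler ODE on an open interval `I` with a critical point `c ∈ I` is of the form
`ψ(θ) = γ₁ + γ₂ cos(2(θ - c))` with `γ₁ = (A + P/(2A))/2`, `γ₂ = (A - P/(2A))/2`, `A = ψ(c)`;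
in particular `P = 2(γ₁² - γ₂²)`. -/
theorem lambda_two_classification
    (P : ℝ) (I : Set ℝ) (hIopen : IsOpen I) (hIconn : IsPreconnected I)
    (ψ ψ' ψ'' : ℝ → ℝ)
    (hpos : ∀ θ ∈ I, 0 < ψ θ)
    (hd1 : ∀ θ ∈ I, HasDerivAt ψ (ψ' θ) θ)
    (hd2 : ∀ θ ∈ I, HasDerivAt ψ' (ψ'' θ) θ)
    (hode : ∀ θ ∈ I, 2 * ((2:ℝ) - 1) * P =
      -((2:ℝ) - 1) * (ψ' θ) ^ 2 + (2:ℝ) ^ 2 * (ψ θ) ^ 2 + 2 * (ψ'' θ) * (ψ θ))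
    (c : ℝ) (hc : c ∈ I) (hc' : ψ' c = 0) :
    (∀ θ ∈ I, ψ θ = (ψ c + P / (2 * ψ c)) / 2 +
      (ψ c - P / (2 * ψ c)) / 2 * Real.cos (2 * (θ - c))) ∧
    P = 2 * (((ψ c + P / (2 * ψ c)) / 2) ^ 2 - ((ψ c - P / (2 * ψ c)) / 2) ^ 2) := by
  set A := ψ c with hA
  have hA0 : 0 < A := hpos c hc
  have hAne : A ≠ 0 := ne_of_gt hA0
  set E : ℝ := 2 * P / A + 4 * A with hE
  set γ₁ : ℝ := (A + P / (2 * A)) / 2 with hγ₁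
  set γ₂ : ℝ := (A - P / (2 * A)) / 2 with hγ₂
  -- the ODE rewritten
  have hode' : ∀ θ ∈ I, 2 * ψ'' θ * ψ θ = 2 * P + (ψ' θ) ^ 2 - 4 * (ψ θ) ^ 2 := by
    intro θ hθ; have := hode θ hθ; nlinarith [this]
  -- conserved quantity
  set G : ℝ → ℝ := fun θ => (ψ' θ) ^ 2 + 2 * P + 4 * (ψ θ) ^ 2 - E * ψ θ with hG
  have hGd : ∀ θ ∈ I, HasDerivAt G (2 * ψ' θ * ψ'' θ + 8 * ψ θ * ψ' θ - E * ψ' θ) θ := by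
    intro θ hθ
    have h1 := ((hd2 θ hθ).pow 2).add_const (2 * P)
    have h2 := ((hd1 θ hθ).pow 2).const_mul (4:ℝ)
    have h3 := (hd1 θ hθ).const_mul E
    have := (h1.add h2).sub h3
    refine this.congr_deriv (Eq.symm ?_)
    ring
  set Q : ℝ → ℝ := fun θ => G θ / ψ θ with hQ
  have hQd : ∀ θ ∈ I, HasDerivAt Q 0 θ := by
    intro θ hθ
    have hψne : ψ θ ≠ 0 := ne_of_gt (hpos θ hθ)
    have := (hGd θ hθ).div (hd1 θ hθ) hψne
    refine this.congr_deriv (Eq.symm ?_)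
    rw [eq_comm, div_eq_zero_iff]
    left
    have hode2 := hode' θ hθ
    simp only [hG]
    linear_combination (ψ' θ) * hode2
  have hQc : Q c = 0 := by
    have hGc : G c = 0 := by
      simp only [hG, hc', hE, ← hA]
      field_simp
      ring
    simp [hQ, hGc]
  have hGzero : ∀ θ ∈ I, G θ = 0 := by
    intro θ hθ
    have : Q θ = Q c := const_of_deriv_zero' hIopen hIconn hQd hθ hc
    rw [hQc] at this
    have hψne : ψ θ ≠ 0 := ne_of_gt (hpos θ hθ)
    simp only [hQ] at this
    exact (div_eq_zero_iff.mp this).resolve_right hψne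
  -- linear ODE: ψ'' = E/2 - 4ψ
  have hlin : ∀ θ ∈ I, ψ'' θ = E / 2 - 4 * ψ θ := by
    intro θ hθ
    have h1 := hode' θ hθ
    have h2 := hGzero θ hθ
    simp only [hG] at h2
    have hψpos := hpos θ hθ
    have h4 : ψ'' θ * (2 * ψ θ) = (E / 2 - 4 * ψ θ) * (2 * ψ θ) := by
      linear_combination h1 + h2
    exact mul_right_cancel₀ (by positivity) h4
  -- the difference w and its energy
  set w : ℝ → ℝ := fun θ => ψ θ - (γ₁ + γ₂ * Real.cos (2 * (θ - c))) with hw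
  set w' : ℝ → ℝ := fun θ => ψ' θ + 2 * γ₂ * Real.sin (2 * (θ - c)) with hw'
  have hcosd : ∀ θ : ℝ, HasDerivAt (fun θ => γ₁ + γ₂ * Real.cos (2 * (θ - c)))
      (-(2 * γ₂ * Real.sin (2 * (θ - c)))) θ := by
    intro θ
    have h0 : HasDerivAt (fun θ : ℝ => 2 * (θ - c)) 2 θ := by
      simpa using ((hasDerivAt_id θ).sub_const c).const_mul (2:ℝ)
    have h1 := (h0.cos).const_mul γ₂
    have := h1.const_add γ₁
    refine this.congr_deriv (Eq.symm ?_)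
    ring
  have hsind : ∀ θ : ℝ, HasDerivAt (fun θ => 2 * γ₂ * Real.sin (2 * (θ - c)))
      (4 * γ₂ * Real.cos (2 * (θ - c))) θ := by
    intro θ
    have h0 : HasDerivAt (fun θ : ℝ => 2 * (θ - c)) 2 θ := by
      simpa using ((hasDerivAt_id θ).sub_const c).const_mul (2:ℝ)
    have := (h0.sin).const_mul (2 * γ₂)
    refine this.congr_deriv (Eq.symm ?_)
    ring
  have hwd : ∀ θ ∈ I, HasDerivAt w (w' θ) θ := by
    intro θ hθ
    have := (hd1 θ hθ).sub (hcosd θ)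
    refine this.congr_deriv (Eq.symm ?_)
    simp only [hw']
    ring
  have hw'd : ∀ θ ∈ I, HasDerivAt w' (ψ'' θ + 4 * γ₂ * Real.cos (2 * (θ - c))) θ := by
    intro θ hθ
    exact (hd2 θ hθ).add (hsind θ)
  have hEγ : E / 2 = 4 * γ₁ := by
    simp only [hE, hγ₁]; field_simp; ring
  -- energy v = w'^2 + 4 w^2
  set v : ℝ → ℝ := fun θ => (w' θ) ^ 2 + 4 * (w θ) ^ 2 with hv
  have hvd : ∀ θ ∈ I, HasDerivAt v 0 θ := by
    intro θ hθ
    have h1 := ((hw'd θ hθ).pow 2).add (((hwd θ hθ).pow 2).const_mul (4:ℝ))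
    refine h1.congr_deriv (Eq.symm ?_)
    have hkey : ψ'' θ + 4 * γ₂ * Real.cos (2 * (θ - c)) = -(4 * w θ) := by
      rw [hlin θ hθ, hEγ]; simp only [hw]; ring
    rw [hkey]
    push_cast
    ring
  have hvc : v c = 0 := by
    have hw'c : w' c = 0 := by simp [hw', hc']
    have hwc : w c = 0 := by
      have : γ₁ + γ₂ = A := by simp only [hγ₁, hγ₂]; ring
      simp [hw, ← hA, ← this]
    simp [hv, hw'c, hwc]
  have hmain : ∀ θ ∈ I, ψ θ = γ₁ + γ₂ * Real.cos (2 * (θ - c)) := by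
    intro θ hθ
    have : v θ = v c := const_of_deriv_zero' hIopen hIconn hvd hθ hc
    rw [hvc] at this
    simp only [hv] at this
    have hwθ : w θ = 0 := by nlinarith [sq_nonneg (w' θ), sq_nonneg (w θ)]
    simp only [hw] at hwθ
    linarith
  refine ⟨hmain, ?_⟩
  show P = 2 * (γ₁ ^ 2 - γ₂ ^ 2)
  simp only [hγ₁, hγ₂]
  field_simp
  ring
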